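/- For every real β < 1 one has ∫_0^∞ ln(1 - β/cosh x) dx = (1/2)(arcosh(-β))² + π²/8, where for -β ∈ (-1,1) arcosh(-β) is interpreted as i·arccos(-β) so that (arcosh(-β))² = -(arccos(-β))². -/

import Mathlib

/-- The real inverse hyperbolic cosine, `arcosh x = log (x + √(x² - 1))` (for `x ≥ 1`). -/
noncomputable def arcosh (x : ℝ) : ℝ := Real.log (x + Real.sqrt (x ^ 2 - 1))

open MeasureTheory Real Set Filter Topology

lemma integrableOn_inv_cosh : IntegrableOn (fun x : ℝ => (Real.cosh x)⁻¹) (Set.Ioi 0) := by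
  apply Integrable.mono' ((exp_neg_integrableOn_Ioi 0 one_pos).const_mul 2)
  · exact (Real.continuous_cosh.inv₀ (fun x => (Real.cosh_pos x).ne')).aestronglyMeasurable
  · filter_upwards with x
    rw [norm_inv, norm_of_nonneg (Real.cosh_pos x).le]
    have h1 : Real.exp x / 2 ≤ Real.cosh x := by
      rw [Real.cosh_eq]; have := (Real.exp_pos (-x)).le; linarith
    have h2 : (0:ℝ) < Real.exp x / 2 := by positivity
    calc (Real.cosh x)⁻¹ ≤ (Real.exp x / 2)⁻¹ := inv_anti₀ h2 h1
      _ = 2 * Real.exp (-1 * x) := by rw [neg_one_mul, Real.exp_neg]; field_simp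

lemma cosh_sub_pos {t x : ℝ} (ht : t < 1) : 0 < Real.cosh x - t :=
  sub_pos.2 (lt_of_lt_of_le ht (Real.one_le_cosh x))

lemma cosh_sub_ge {t x : ℝ} (ht : t < 1) :
    (1 - max t 0) * Real.cosh x ≤ Real.cosh x - t := by
  have h1 := Real.one_le_cosh x
  rcases le_or_gt t 0 with h | h
  · rw [max_eq_right h]; nlinarith
  · rw [max_eq_left h.le]; nlinarith

lemma inv_cosh_sub_le {t x : ℝ} (ht : t < 1) :
    (Real.cosh x - t)⁻¹ ≤ (1 - max t 0)⁻¹ * (Real.cosh x)⁻¹ := by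
  have hm : 0 < 1 - max t 0 := by
    rcases le_or_gt t 0 with h | h
    · rw [max_eq_right h]; norm_num
    · rw [max_eq_left h.le]; linarith
  rw [← mul_inv]
  exact inv_anti₀ (by positivity) (cosh_sub_ge ht)

lemma integrableOn_inv_cosh_sub {t : ℝ} (ht : t < 1) :
    IntegrableOn (fun x : ℝ => (Real.cosh x - t)⁻¹) (Set.Ioi 0) := by
  apply Integrable.mono' (integrableOn_inv_cosh.const_mul ((1 - max t 0)⁻¹))
  · exact ((Real.continuous_cosh.sub continuous_const).inv₀
      (fun x => (cosh_sub_pos ht).ne')).aestronglyMeasurable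
  · filter_upwards with x
    rw [norm_of_nonneg (inv_nonneg.2 (cosh_sub_pos ht).le)]
    exact inv_cosh_sub_le ht




lemma cosh_sub_pos' {t x : ℝ} (ht : t < 1) : 0 < Real.cosh x - t :=
  sub_pos.2 (lt_of_lt_of_le ht (Real.one_le_cosh x))

noncomputable def G (t : ℝ) : ℝ := ∫ x in Set.Ioi (0:ℝ), (Real.cosh x - t)⁻¹

-- antiderivative derivative, mid case
lemma hasDerivAt_A_mid {t : ℝ} (h1 : -1 < t) (h2 : t < 1) (x : ℝ) :
    HasDerivAt (fun y : ℝ => 2 / Real.sqrt (1 - t^2) *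
      Real.arctan ((Real.exp y - t) / Real.sqrt (1 - t^2)))
      ((Real.cosh x - t)⁻¹) x := by
  set d := Real.sqrt (1 - t^2) with hd
  have hd2 : d^2 = 1 - t^2 := Real.sq_sqrt (by nlinarith)
  have hdpos : 0 < d := Real.sqrt_pos.2 (by nlinarith)
  have hu : HasDerivAt (fun y : ℝ => (Real.exp y - t) / d) (Real.exp x / d) x :=
    ((Real.hasDerivAt_exp x).sub_const t).div_const d
  have := ((Real.hasDerivAt_arctan ((Real.exp x - t)/d)).comp x hu).const_mul (2 / d)
  refine this.congr_deriv (Eq.symm ?_)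
  have hex : 0 < Real.exp x := Real.exp_pos x
  have hcosh : Real.cosh x = (Real.exp x + (Real.exp x)⁻¹) / 2 := by
    rw [Real.cosh_eq, Real.exp_neg]
  have hden : 0 < 1 + ((Real.exp x - t)/d)^2 := by positivity
  have hq : Real.exp x * Real.exp x + 1 - Real.exp x * 2 * t > 0 := by
    have h3 := cosh_sub_pos' (x:=x) (t:=t) h2
    rw [hcosh] at h3
    nlinarith [h3, hex, mul_inv_cancel₀ hex.ne']
  rw [hcosh]
  field_simp
  rw [div_eq_one_iff_eq (ne_of_gt (by nlinarith [hq]))]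
  linear_combination hd2



lemma arctan_arccos {t : ℝ} (h1 : -1 < t) (h2 : t < 1) :
    Real.arctan ((1 - t) / Real.sqrt (1 - t^2)) = Real.pi/2 - Real.arccos (-t) / 2 := by
  set θ := Real.arccos (-t) with hθ
  have hθ1 : 0 < θ := (Real.arccos_pos).2 (by linarith)
  have hθ2 : θ < Real.pi := by
    rcases lt_or_eq_of_le (Real.arccos_le_pi (-t)) with h | h
    · exact h
    · exact absurd (Real.arccos_eq_pi.1 h) (by linarith)
  have hcos : Real.cos θ = -t := Real.cos_arccos (by linarith) (by linarith)
  have hsin : Real.sin θ = Real.sqrt (1 - t^2) := by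
    rw [hθ, Real.sin_arccos]; ring_nf
  have hc2 : 0 < Real.cos (θ/2) := Real.cos_pos_of_mem_Ioo ⟨by linarith [Real.pi_pos], by linarith⟩
  have hs2 : 0 < Real.sin (θ/2) := Real.sin_pos_of_pos_of_lt_pi (by linarith) (by linarith)
  have e1 : 1 - t = 2 * Real.cos (θ/2)^2 := by
    have := Real.cos_sq (θ/2)
    rw [show 2 * (θ/2) = θ by ring, hcos] at this
    linarith
  have e2 : Real.sqrt (1 - t^2) = 2 * Real.sin (θ/2) * Real.cos (θ/2) := by
    rw [← hsin]
    have : θ = 2 * (θ/2) := by ring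
    nth_rewrite 1 [this]
    rw [Real.sin_two_mul]
  have key : (1 - t) / Real.sqrt (1 - t^2) = Real.tan (Real.pi/2 - θ/2) := by
    rw [Real.tan_pi_div_two_sub, Real.tan_eq_sin_div_cos, e1, e2]
    field_simp
  rw [key, Real.arctan_tan (by linarith [Real.pi_pos]) (by linarith)]

lemma G_eq_mid {t : ℝ} (h1 : -1 < t) (h2 : t < 1) :
    G t = Real.arccos (-t) / Real.sqrt (1 - t^2) := by
  have hdpos : 0 < Real.sqrt (1 - t^2) := Real.sqrt_pos.2 (by nlinarith)
  set d := Real.sqrt (1 - t^2) with hd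
  have hlim : Tendsto (fun y : ℝ => 2/d * Real.arctan ((Real.exp y - t)/d)) atTop
      (𝓝 (2/d * (Real.pi/2))) := by
    apply Tendsto.const_mul
    have hexp : Tendsto (fun y : ℝ => (Real.exp y - t)/d) atTop atTop := by
      apply Tendsto.atTop_div_const hdpos
      simpa [sub_eq_add_neg] using tendsto_atTop_add_const_right atTop (-t) Real.tendsto_exp_atTop
    exact (Real.tendsto_arctan_atTop.mono_right nhdsWithin_le_nhds).comp hexp
  have := integral_Ioi_of_hasDerivAt_of_tendsto
    ((hasDerivAt_A_mid h1 h2 0).continuousAt.continuousWithinAt)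
    (fun x _ => hasDerivAt_A_mid h1 h2 x) (integrableOn_inv_cosh_sub h2) hlim
  rw [G, this, Real.exp_zero, arctan_arccos h1 h2, ← hd]
  field_simp
  ring
lemma d_lt_neg {t : ℝ} (h : t < -1) : Real.sqrt (t^2 - 1) < -t := by
  nlinarith [Real.sq_sqrt (show (0:ℝ) ≤ t^2 - 1 by nlinarith), Real.sqrt_nonneg (t^2-1)]

lemma hasDerivAt_A_low {t : ℝ} (h : t < -1) (x : ℝ) :
    HasDerivAt (fun y : ℝ => 1 / Real.sqrt (t^2 - 1) *
      (Real.log (Real.exp y - t - Real.sqrt (t^2 - 1))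
        - Real.log (Real.exp y - t + Real.sqrt (t^2 - 1))))
      ((Real.cosh x - t)⁻¹) x := by
  have hd2 : (Real.sqrt (t^2-1))^2 = t^2 - 1 := Real.sq_sqrt (by nlinarith)
  have hdnn : (0:ℝ) ≤ Real.sqrt (t^2-1) := Real.sqrt_nonneg _
  have hdlt := d_lt_neg h
  set d := Real.sqrt (t^2 - 1) with hd
  have hdpos : 0 < d := Real.sqrt_pos.2 (by nlinarith)
  have hex : 0 < Real.exp x := Real.exp_pos x
  have hp1 : 0 < Real.exp x - t - d := by linarith
  have hp2 : 0 < Real.exp x - t + d := by linarith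
  have hu1 : HasDerivAt (fun y : ℝ => Real.exp y - t - d) (Real.exp x) x := by
    simpa using ((Real.hasDerivAt_exp x).sub_const t).sub_const d
  have hu2 : HasDerivAt (fun y : ℝ => Real.exp y - t + d) (Real.exp x) x := by
    simpa using ((Real.hasDerivAt_exp x).sub_const t).add_const d
  have hl1 := (Real.hasDerivAt_log hp1.ne').comp x hu1
  have hl2 := (Real.hasDerivAt_log hp2.ne').comp x hu2
  have := (hl1.sub hl2).const_mul (1/d)
  refine this.congr_deriv (Eq.symm ?_)
  have hcosh : Real.cosh x = (Real.exp x + (Real.exp x)⁻¹) / 2 := by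
    rw [Real.cosh_eq, Real.exp_neg]
  have hq : 0 < Real.cosh x - t := by
    have := Real.one_le_cosh x; linarith
  have h5 : (Real.exp x - t - d) * (Real.exp x - t + d) = Real.exp x^2 - 2*t*Real.exp x + 1 := by
    linear_combination -hd2
  have h6 : Real.cosh x - t = (Real.exp x^2 - 2*t*Real.exp x + 1)/(2*Real.exp x) := by
    rw [hcosh]; field_simp; ring
  have h7 : 0 < Real.exp x^2 - 2*t*Real.exp x + 1 := by
    nlinarith [mul_pos hp1 hp2, h5]
  rw [h6]
  field_simp
  rw [div_eq_iff (ne_of_gt (by nlinarith [h7]))]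
  linear_combination (2*d) * h5

lemma G_eq_low {t : ℝ} (h : t < -1) :
    G t = Real.log (-t + Real.sqrt (t^2 - 1)) / Real.sqrt (t^2 - 1) := by
  have hd2 : (Real.sqrt (t^2-1))^2 = t^2 - 1 := Real.sq_sqrt (by nlinarith)
  have hdnn : (0:ℝ) ≤ Real.sqrt (t^2-1) := Real.sqrt_nonneg _
  have hdlt := d_lt_neg h
  set d := Real.sqrt (t^2 - 1) with hd
  have hdpos : 0 < d := Real.sqrt_pos.2 (by nlinarith)
  have hlim : Tendsto (fun y : ℝ => 1/d *
      (Real.log (Real.exp y - t - d) - Real.log (Real.exp y - t + d))) atTop (𝓝 (1/d * 0)) := by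
    apply Tendsto.const_mul
    have hratio : Tendsto (fun y : ℝ => (Real.exp y - t - d) / (Real.exp y - t + d)) atTop (𝓝 1) := by
      have hden : Tendsto (fun y : ℝ => Real.exp y - t + d) atTop atTop := by
        simpa [sub_eq_add_neg, add_assoc] using
          tendsto_atTop_add_const_right atTop (-t + d) Real.tendsto_exp_atTop
      have h0 : Tendsto (fun y : ℝ => 1 - 2*d * (Real.exp y - t + d)⁻¹) atTop (𝓝 (1 - 2*d*0)) :=
        tendsto_const_nhds.sub ((hden.inv_tendsto_atTop).const_mul (2*d))
      rw [show (1:ℝ) - 2*d*0 = 1 by ring] at h0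
      apply h0.congr
      intro y
      have hp2 : (0:ℝ) < Real.exp y - t + d := by linarith [Real.exp_pos y]
      field_simp
      ring
    have hcomp := (Real.continuousAt_log one_ne_zero).tendsto.comp hratio
    rw [Real.log_one] at hcomp
    apply hcomp.congr
    intro y
    have hp1 : (0:ℝ) < Real.exp y - t - d := by linarith [Real.exp_pos y]
    have hp2 : (0:ℝ) < Real.exp y - t + d := by linarith [Real.exp_pos y]
    simp only [Function.comp_apply]
    exact Real.log_div hp1.ne' hp2.ne'
  have hint := integral_Ioi_of_hasDerivAt_of_tendsto
    ((hasDerivAt_A_low h 0).continuousAt.continuousWithinAt)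
    (fun x _ => hasDerivAt_A_low h x) (integrableOn_inv_cosh_sub (by linarith)) hlim
  rw [G, hint, Real.exp_zero, ← hd]
  have hp1 : (0:ℝ) < 1 - t - d := by linarith
  have hfact : 1 - t + d = (-t + d) * (1 - t - d) := by nlinarith [hd2]
  have hlog : Real.log (1 - t + d) = Real.log (-t + d) + Real.log (1 - t - d) := by
    rw [hfact, Real.log_mul (by linarith : (0:ℝ) < -t + d).ne' hp1.ne']
  field_simp
  linarith [hlog]



lemma inv_cosh_sub_le' {b s x : ℝ} (hb : b < 1) (hs : s ≤ b) :
    (Real.cosh x - s)⁻¹ ≤ (1 - max b 0)⁻¹ * (Real.cosh x)⁻¹ := by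
  have h1 := Real.one_le_cosh x
  have hm : 0 < 1 - max b 0 := by
    rcases le_or_gt b 0 with h | h
    · rw [max_eq_right h]; norm_num
    · rw [max_eq_left h.le]; linarith
  rw [← mul_inv]
  apply inv_anti₀ (by positivity)
  rcases le_or_gt b 0 with h | h
  · rw [max_eq_right h]; nlinarith
  · rw [max_eq_left h.le]; nlinarith

lemma integrable_prod {a b : ℝ} (hb : b < 1) :
    Integrable (fun p : ℝ × ℝ => (Real.cosh p.1 - p.2)⁻¹)
      ((volume.restrict (Set.Ioi 0)).prod (volume.restrict (Set.Ioc a b))) := by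
  have hbound : Integrable (fun p : ℝ × ℝ => ((1 - max b 0)⁻¹ * (Real.cosh p.1)⁻¹) * (1:ℝ))
      ((volume.restrict (Set.Ioi 0)).prod (volume.restrict (Set.Ioc a b))) := by
    exact Integrable.mul_prod (g := fun _ : ℝ => (1:ℝ)) (integrableOn_inv_cosh.const_mul _)
      (integrableOn_const measure_Ioc_lt_top.ne)
  apply Integrable.mono' hbound
  · rw [Measure.prod_restrict]
    apply ContinuousOn.aestronglyMeasurable _ (measurableSet_Ioi.prod measurableSet_Ioc)
    apply ContinuousOn.inv₀
    · exact ((Real.continuous_cosh.comp continuous_fst).sub continuous_snd).continuousOn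
    · rintro ⟨x, s⟩ ⟨-, -, hs2⟩
      exact (cosh_sub_pos' (lt_of_le_of_lt hs2 hb)).ne'
  · rw [Measure.prod_restrict, ae_restrict_iff' (measurableSet_Ioi.prod measurableSet_Ioc)]
    filter_upwards with p hp
    obtain ⟨-, -, hs2⟩ := hp
    rw [mul_one, norm_inv, norm_of_nonneg (cosh_sub_pos' (lt_of_le_of_lt hs2 hb)).le]
    exact inv_cosh_sub_le' hb hs2

lemma G_integrableOn {a b : ℝ} (hb : b < 1) : IntegrableOn G (Set.Ioc a b) :=
  (integrable_prod (a := a) hb).integral_prod_right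

lemma G_intervalIntegrable {a b : ℝ} (hab : a ≤ b) (hb : b < 1) :
    IntervalIntegrable G volume a b :=
  (intervalIntegrable_iff_integrableOn_Ioc_of_le hab).2 (G_integrableOn hb)

lemma swap_eq {a b : ℝ} (hb : b < 1) :
    ∫ x in Set.Ioi (0:ℝ), (∫ s in Set.Ioc a b, (Real.cosh x - s)⁻¹)
      = ∫ s in Set.Ioc a b, G s :=
  MeasureTheory.integral_integral_swap (f := fun x s => (Real.cosh x - s)⁻¹)
    (integrable_prod hb)

lemma log_eq {β : ℝ} (hβ : β < 1) (x : ℝ) :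
    Real.log (1 - β / Real.cosh x) = -∫ s in (0:ℝ)..β, (Real.cosh x - s)⁻¹ := by
  have hc : 0 < Real.cosh x := Real.cosh_pos x
  have hs1 : ∀ s ∈ Set.uIcc (0:ℝ) β, s < 1 := by
    intro s hs
    rcases Set.mem_uIcc.1 hs with ⟨-, h⟩ | ⟨-, h⟩
    · exact lt_of_le_of_lt h hβ
    · linarith
  have hderiv : ∀ s ∈ Set.uIcc (0:ℝ) β,
      HasDerivAt (fun s => -Real.log (Real.cosh x - s)) ((Real.cosh x - s)⁻¹) s := by
    intro s hs
    have hpos := cosh_sub_pos' (x := x) (hs1 s hs)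
    have h1 : HasDerivAt (fun s : ℝ => Real.cosh x - s) (-1) s := by
      simpa using (hasDerivAt_id s).const_sub (Real.cosh x)
    have := ((Real.hasDerivAt_log hpos.ne').comp s h1).neg
    refine this.congr_deriv (Eq.symm ?_)
    field_simp
  have hint : IntervalIntegrable (fun s => (Real.cosh x - s)⁻¹) volume 0 β := by
    apply ContinuousOn.intervalIntegrable
    apply ContinuousOn.inv₀
    · exact (continuous_const.sub continuous_id).continuousOn
    · exact fun s hs => (cosh_sub_pos' (x := x) (hs1 s hs)).ne'
  rw [intervalIntegral.integral_eq_sub_of_hasDerivAt hderiv hint]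
  have h2 : 1 - β / Real.cosh x = (Real.cosh x - β) / Real.cosh x := by field_simp
  rw [h2, Real.log_div (cosh_sub_pos' (x := x) hβ).ne' hc.ne']
  simp
  ring

lemma key {β : ℝ} (hβ : β < 1) :
    (∫ x in Set.Ioi (0:ℝ), Real.log (1 - β / Real.cosh x)) = -∫ t in (0:ℝ)..β, G t := by
  have h1 : (fun x => Real.log (1 - β / Real.cosh x))
      = fun x => -∫ s in (0:ℝ)..β, (Real.cosh x - s)⁻¹ := funext (log_eq hβ)
  rw [h1, integral_neg, neg_inj]
  rcases le_or_gt 0 β with hle | hlt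
  · simp_rw [intervalIntegral.integral_of_le hle]
    exact swap_eq hβ
  · simp_rw [intervalIntegral.integral_symm β 0, intervalIntegral.integral_of_le hlt.le,
      integral_neg]
    rw [swap_eq (by norm_num : (0:ℝ) < 1)]

noncomputable def Psi (t : ℝ) : ℝ := 1/2 * Real.arccos (-t) ^ 2
noncomputable def Chi (t : ℝ) : ℝ := -(1/2 * Real.log (-t + Real.sqrt (t^2 - 1)) ^ 2)

lemma hasDerivAt_Psi {t : ℝ} (h1 : -1 < t) (h2 : t < 1) :
    HasDerivAt Psi (Real.arccos (-t) / Real.sqrt (1 - t^2)) t := by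
  have hneg : HasDerivAt (fun s : ℝ => -s) (-1) t := (hasDerivAt_id t).neg
  have harc := (Real.hasDerivAt_arccos (by linarith : -t ≠ -1)
    (by linarith : -t ≠ 1)).comp t hneg
  have := (harc.pow 2).const_mul (1/2 : ℝ)
  refine this.congr_deriv (Eq.symm ?_)
  have hsq : Real.sqrt (1 - (-t)^2) = Real.sqrt (1 - t^2) := by rw [neg_pow]; ring_nf
  have hd : (0:ℝ) < Real.sqrt (1 - t^2) := Real.sqrt_pos.2 (by nlinarith)
  simp only [Function.comp_apply, hsq]
  field_simp
  norm_num
  ring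

lemma hasDerivAt_Chi {t : ℝ} (h : t < -1) :
    HasDerivAt Chi (Real.log (-t + Real.sqrt (t^2 - 1)) / Real.sqrt (t^2 - 1)) t := by
  have hd2 : (Real.sqrt (t^2-1))^2 = t^2 - 1 := Real.sq_sqrt (by nlinarith)
  have hdnn : (0:ℝ) ≤ Real.sqrt (t^2-1) := Real.sqrt_nonneg _
  set d := Real.sqrt (t^2 - 1) with hdd
  have hdpos : 0 < d := Real.sqrt_pos.2 (by nlinarith)
  have hvpos : 0 < -t + d := by linarith
  have hsq : HasDerivAt (fun s : ℝ => Real.sqrt (s^2 - 1)) (t / d) t := by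
    have hinner : HasDerivAt (fun s : ℝ => s^2 - 1) (2*t) t := by
      simpa using ((hasDerivAt_pow 2 t).sub_const 1)
    have := (Real.hasDerivAt_sqrt (by nlinarith : t^2 - 1 ≠ 0)).comp t hinner
    refine this.congr_deriv (Eq.symm ?_)
    rw [← hdd]
    field_simp
  have hv : HasDerivAt (fun s : ℝ => -s + Real.sqrt (s^2 - 1)) (-1 + t/d) t :=
    (hasDerivAt_id t).neg.add hsq
  have hlog := (Real.hasDerivAt_log hvpos.ne').comp t hv
  have hu : HasDerivAt (fun s : ℝ => Real.log (-s + Real.sqrt (s^2 - 1))) (-1/d) t := by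
    refine hlog.congr_deriv (Eq.symm ?_)
    field_simp
    ring
  have := ((hu.pow 2).const_mul (1/2 : ℝ)).neg
  refine this.congr_deriv (Eq.symm ?_)
  simp only [← hdd]
  field_simp
  ring


theorem stmt_12 (β : ℝ) (hβ : β < 1) :
    (∫ x in Set.Ioi (0:ℝ), Real.log (1 - β / Real.cosh x))
      = (if β ≤ -1 then (1 / 2) * _root_.arcosh (-β) ^ 2
          else -((1 / 2) * Real.arccos (-β) ^ 2)) + Real.pi ^ 2 / 8 := by
  have hPsi0 : Psi 0 = Real.pi ^ 2 / 8 := by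
    simp [Psi, Real.arccos_zero]
    ring
  rw [key hβ]
  by_cases hle : β ≤ -1
  · rw [if_pos hle]
    rw [← intervalIntegral.integral_symm 0 β]
    have i1 : IntervalIntegrable G volume β (-1) :=
      G_intervalIntegrable hle (by norm_num)
    have i2 : IntervalIntegrable G volume (-1) 0 :=
      G_intervalIntegrable (by norm_num) (by norm_num)
    rw [← intervalIntegral.integral_add_adjacent_intervals i1 i2]
    have hP1 : ∫ t in β..(-1:ℝ), G t = Chi (-1) - Chi β := by
      apply intervalIntegral.integral_eq_sub_of_hasDeriv_right_of_le hle _ _ i1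
      · intro t ht
        have hcontv : Continuous (fun t : ℝ => -t + Real.sqrt (t^2 - 1)) :=
          continuous_id.neg.add (Real.continuous_sqrt.comp ((continuous_pow 2).sub continuous_const))
        have hv : 0 < -t + Real.sqrt (t^2-1) := by
          have h1 := Real.sqrt_nonneg (t^2-1); have h2 := ht.2; linarith
        have hca : ContinuousAt (fun t : ℝ => Real.log (-t + Real.sqrt (t^2-1))) t :=
          ContinuousAt.comp (g := Real.log) (f := fun s : ℝ => -s + Real.sqrt (s^2-1))
            (Real.continuousAt_log hv.ne') hcontv.continuousAt
        have : ContinuousAt Chi t := by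
          unfold Chi
          exact (continuousAt_const.mul (hca.pow 2)).neg
        exact this.continuousWithinAt
      · intro t ht
        rw [G_eq_low ht.2]
        exact (hasDerivAt_Chi ht.2).hasDerivWithinAt
    have hP2 : ∫ t in (-1:ℝ)..0, G t = Psi 0 - Psi (-1) := by
      apply intervalIntegral.integral_eq_sub_of_hasDeriv_right_of_le (by norm_num) _ _ i2
      · have : Continuous Psi := by
          unfold Psi
          exact continuous_const.mul ((Real.continuous_arccos.comp continuous_neg).pow 2)
        exact this.continuousOn
      · intro t ht
        rw [G_eq_mid ht.1 (lt_of_lt_of_le ht.2 (by norm_num))]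
        exact (hasDerivAt_Psi ht.1 (lt_of_lt_of_le ht.2 (by norm_num))).hasDerivWithinAt
    have hChi1 : Chi (-1) = 0 := by norm_num [Chi]
    have hPsi1 : Psi (-1) = 0 := by norm_num [Psi, Real.arccos_one]
    have hChib : Chi β = -(1/2 * _root_.arcosh (-β) ^ 2) := by
      rw [Chi, _root_.arcosh, neg_sq]
    rw [hP1, hP2, hChi1, hPsi1, hPsi0, hChib]
    ring
  · push_neg at hle
    rw [if_neg (by linarith)]
    have hder : ∀ t ∈ Set.uIcc (0:ℝ) β, HasDerivAt Psi (G t) t := by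
      intro t ht
      have h12 : -1 < t ∧ t < 1 := by
        rcases Set.mem_uIcc.1 ht with ⟨h1, h2⟩ | ⟨h1, h2⟩
        · constructor <;> [linarith; exact lt_of_le_of_lt h2 hβ]
        · constructor <;> [linarith; linarith]
      rw [G_eq_mid h12.1 h12.2]
      exact hasDerivAt_Psi h12.1 h12.2
    have hint : IntervalIntegrable G volume 0 β := by
      rcases le_total 0 β with h | h
      · exact G_intervalIntegrable h hβ
      · exact (G_intervalIntegrable h (by norm_num)).symm
    rw [intervalIntegral.integral_eq_sub_of_hasDerivAt hder hint, hPsi0]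
    have : Psi β = 1/2 * Real.arccos (-β) ^ 2 := rfl
    rw [this]
    ring
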